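/- Let 𝒞 be a stable cofibration category and consider a pushout square in 𝒞 with f: X → Y a cofibration, g: X → Z arbitrary, and P = Y ∪_X Z. Then the image of this square in the triangulated homotopy category Ho(𝒞) is homotopy cartesian; more precisely there is an exact triangle Y ⊕ Z → P → ΣX → Σ(Y ⊕ Z) whose last morphism is Σ of the map (−f, g). -/

import Mathlib

open CategoryTheory Category Limits Pretriangulated

universe v v' u u'

section Defs

variable {H : Type u'} [Category.{v'} H] [Preadditive H] [HasZeroObject H] [HasShift H ℤ]
  [∀ n : ℤ, (shiftFunctor H n).Additive] [Pretriangulated H] [HasBinaryBiproducts H]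

/-- The square with sides `f : T ⟶ U`, `g : T ⟶ V`, `g' : U ⟶ X`, `f' : V ⟶ X`
is homotopy cartesian. -/
def HomotopyCartesian {T U V X : H} (f : T ⟶ U) (g : T ⟶ V) (g' : U ⟶ X) (f' : V ⟶ X) : Prop :=
  ∃ δ : X ⟶ T⟦(1 : ℤ)⟧,
    Triangle.mk (biprod.lift f (-g)) (biprod.desc g' f') δ ∈ distTriang H

end Defs

variable (C : Type u) [Category.{v} C]

/-- A cofibration category: a category with classes of cofibrations and weak equivalences
subject to the usual axioms. -/
structure CofibrationCategory where
  cof : MorphismProperty C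
  weq : MorphismProperty C
  weq_of_isIso : ∀ {X Y : C} (f : X ⟶ Y), IsIso f → weq f
  weq_comp : ∀ {X Y Z : C} (f : X ⟶ Y) (g : Y ⟶ Z), weq f → weq g → weq (f ≫ g)
  weq_of_comp_left : ∀ {X Y Z : C} (f : X ⟶ Y) (g : Y ⟶ Z), weq g → weq (f ≫ g) → weq f
  weq_of_comp_right : ∀ {X Y Z : C} (f : X ⟶ Y) (g : Y ⟶ Z), weq f → weq (f ≫ g) → weq g
  cof_of_isIso : ∀ {X Y : C} (f : X ⟶ Y), IsIso f → cof f
  cof_comp : ∀ {X Y Z : C} (f : X ⟶ Y) (g : Y ⟶ Z), cof f → cof g → cof (f ≫ g)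
  pushout_exists : ∀ {X Y Z : C} (f : X ⟶ Y) (g : X ⟶ Z), cof f →
    ∃ (P : C) (g' : Y ⟶ P) (f' : Z ⟶ P), IsPushout f g g' f'
  cof_pushout : ∀ {X Y Z P : C} (f : X ⟶ Y) (g : X ⟶ Z) (g' : Y ⟶ P) (f' : Z ⟶ P),
    IsPushout f g g' f' → cof f → cof f'
  acyclic_cof_pushout : ∀ {X Y Z P : C} (f : X ⟶ Y) (g : X ⟶ Z) (g' : Y ⟶ P) (f' : Z ⟶ P),
    IsPushout f g g' f' → cof f → weq f → weq f'
  initial_exists : ∃ I : C, Nonempty (IsInitial I)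
  initial_cof : ∀ {I X : C}, IsInitial I → ∀ f : I ⟶ X, cof f
  factorization : ∀ {X Y : C} (f : X ⟶ Y),
    ∃ (Z : C) (c : X ⟶ Z) (w : Z ⟶ Y), cof c ∧ weq w ∧ c ≫ w = f

variable {C}

/-- A cofibration category is pointed if every initial object is terminal. -/
def CofibrationCategory.Pointed (𝒞 : CofibrationCategory C) : Prop :=
  ∀ I : C, IsInitial I → Nonempty (IsTerminal I)

/-- The data of a quotient `Q = Y/X` of a morphism `f : X ⟶ Y` in a pointed cofibration
category: a pushout of `f` along the map to a point. -/
structure QuotientData (𝒞 : CofibrationCategory C) {X Y : C} (f : X ⟶ Y) where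
  T : C
  hT : IsTerminal T
  hT' : IsInitial T
  toT : X ⟶ T
  Q : C
  q : Y ⟶ Q
  fromT : T ⟶ Q
  isPushout : IsPushout f toT q fromT

/-- A triangulated homotopy category of a stable cofibration category `𝒞`: a localization
`γ : C ⥤ H` of `C` at the weak equivalences together with connecting morphisms making all
elementary triangles (coming from cofibrations and their quotients) distinguished, with the
connecting morphisms natural in morphisms of cofibrations. -/
structure TriangulatedHomotopyCategory (𝒞 : CofibrationCategory C)
    (H : Type u') [Category.{v'} H] [Preadditive H] [HasZeroObject H] [HasShift H ℤ]
    [∀ n : ℤ, (shiftFunctor H n).Additive] [Pretriangulated H] (γ : C ⥤ H) where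
  isLocalization : γ.IsLocalization 𝒞.weq
  δ : ∀ {X Y : C} {f : X ⟶ Y}, 𝒞.cof f → ∀ D : QuotientData 𝒞 f,
    γ.obj D.Q ⟶ (γ.obj X)⟦(1 : ℤ)⟧
  elementary_triangle : ∀ {X Y : C} {f : X ⟶ Y} (hf : 𝒞.cof f) (D : QuotientData 𝒞 f),
    Triangle.mk (γ.map f) (γ.map D.q) (δ hf D) ∈ distTriang H
  δ_natural : ∀ {X Y X' Y' : C} {f : X ⟶ Y} {f' : X' ⟶ Y'}
    (hf : 𝒞.cof f) (hf' : 𝒞.cof f') (x : X ⟶ X') (y : Y ⟶ Y'), f ≫ y = x ≫ f' →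
    ∀ (D : QuotientData 𝒞 f) (D' : QuotientData 𝒞 f') (u : D.Q ⟶ D'.Q),
      D.q ≫ u = y ≫ D'.q →
      δ hf D ≫ ((γ.map x)⟦(1 : ℤ)⟧') = γ.map u ≫ δ hf' D'

section MVAux

/-- Build an `IsPushout` from an explicit universal property. -/
lemma MV.isPushout_mk {X Y Z P : C} (f : X ⟶ Y) (g : X ⟶ Z) (g' : Y ⟶ P) (f' : Z ⟶ P)
    (w : f ≫ g' = g ≫ f')
    (dsc : ∀ {W : C} (u : Y ⟶ W) (v : Z ⟶ W), f ≫ u = g ≫ v → (P ⟶ W))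
    (fac₁ : ∀ {W : C} (u : Y ⟶ W) (v : Z ⟶ W) (h : f ≫ u = g ≫ v), g' ≫ dsc u v h = u)
    (fac₂ : ∀ {W : C} (u : Y ⟶ W) (v : Z ⟶ W) (h : f ≫ u = g ≫ v), f' ≫ dsc u v h = v)
    (uniq : ∀ {W : C} (u : Y ⟶ W) (v : Z ⟶ W) (h : f ≫ u = g ≫ v) (mm : P ⟶ W),
      g' ≫ mm = u → f' ≫ mm = v → mm = dsc u v h) :
    IsPushout f g g' f' :=
  IsPushout.of_isColimit' ⟨w⟩
    (PushoutCocone.IsColimit.mk _ (fun s => dsc s.inl s.inr s.condition)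
      (fun _ => fac₁ _ _ _) (fun _ => fac₂ _ _ _)
      (fun _ mm h₁ h₂ => uniq _ _ _ mm h₁ h₂))

variable {H : Type u'} [Category.{v'} H] [Preadditive H] [HasZeroObject H] [HasShift H ℤ]
  [∀ n : ℤ, (shiftFunctor H n).Additive] [Pretriangulated H] [HasBinaryBiproducts H]

/-- The image of the point is a zero object. -/
lemma MV.isZero (𝒞 : CofibrationCategory C) (γ : C ⥤ H)
    (T : TriangulatedHomotopyCategory 𝒞 H γ) {I : C} (hI : IsInitial I) (hT : IsTerminal I) :
    IsZero (γ.obj I) := by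
  have hsqI : IsPushout (𝟙 I) (𝟙 I) (𝟙 I) (𝟙 I) := IsPushout.of_horiz_isIso ⟨rfl⟩
  have htri := T.elementary_triangle (𝒞.cof_of_isIso (𝟙 I) inferInstance)
    (⟨I, hT, hI, 𝟙 I, I, 𝟙 I, 𝟙 I, hsqI⟩ : QuotientData 𝒞 (𝟙 I))
  have h0 := comp_distTriang_mor_zero₁₂ _ htri
  dsimp [Triangle.mk] at h0
  rw [CategoryTheory.Functor.map_id, id_comp] at h0
  rw [IsZero.iff_id_eq_zero]
  exact h0

/-- Coproducts exist and are sent by `γ` to biproducts. -/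
lemma MV.coprod (𝒞 : CofibrationCategory C) (γ : C ⥤ H)
    (T : TriangulatedHomotopyCategory 𝒞 H γ) {I : C} (hI : IsInitial I) (hT : IsTerminal I)
    (hz : IsZero (γ.obj I)) (A B : C) :
    ∃ (S : C) (inA : A ⟶ S) (inB : B ⟶ S) (pA : S ⟶ A) (pB : S ⟶ B),
      IsPushout (hI.to A) (hI.to B) inA inB ∧ 𝒞.cof inA ∧ 𝒞.cof inB ∧
      inA ≫ pA = 𝟙 A ∧ inB ≫ pB = 𝟙 B ∧
      inA ≫ pB = hT.from A ≫ hI.to B ∧ inB ≫ pA = hT.from B ≫ hI.to A ∧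
      IsIso (biprod.desc (γ.map inA) (γ.map inB)) ∧
      IsIso (biprod.lift (γ.map pA) (γ.map pB)) ∧
      biprod.desc (γ.map inA) (γ.map inB) ≫ biprod.lift (γ.map pA) (γ.map pB) = 𝟙 _ ∧
      biprod.lift (γ.map pA) (γ.map pB) ≫ biprod.desc (γ.map inA) (γ.map inB) = 𝟙 _ := by
  have hzc : ∀ {A' B' : C} (u : A' ⟶ I) (v : I ⟶ B'), γ.map u ≫ γ.map v = 0 := by
    intro A' B' u v
    rw [hz.eq_of_src (γ.map v) 0, comp_zero]
  obtain ⟨S, inA, inB, sq⟩ := 𝒞.pushout_exists (hI.to A) (hI.to B) (𝒞.initial_cof hI _)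
  have hcinB : 𝒞.cof inB := 𝒞.cof_pushout _ _ _ _ sq (𝒞.initial_cof hI _)
  have hcinA : 𝒞.cof inA := 𝒞.cof_pushout _ _ _ _ sq.flip (𝒞.initial_cof hI _)
  refine ⟨S, inA, inB, sq.desc (𝟙 A) (hT.from B ≫ hI.to A) (hI.hom_ext _ _),
    sq.desc (hT.from A ≫ hI.to B) (𝟙 B) (hI.hom_ext _ _), sq, hcinA, hcinB, ?_⟩
  set pA := sq.desc (𝟙 A) (hT.from B ≫ hI.to A) (hI.hom_ext _ _) with hpA
  set pB := sq.desc (hT.from A ≫ hI.to B) (𝟙 B) (hI.hom_ext _ _) with hpB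
  have hApA : inA ≫ pA = 𝟙 A := sq.inl_desc _ _ _
  have hBpB : inB ≫ pB = 𝟙 B := sq.inr_desc _ _ _
  have hApB : inA ≫ pB = hT.from A ≫ hI.to B := sq.inl_desc _ _ _
  have hBpA : inB ≫ pA = hT.from B ≫ hI.to A := sq.inr_desc _ _ _
  refine ⟨hApA, hBpB, hApB, hBpA, ?_⟩
  -- the quotient of `inB : B ⟶ S` is `A` via `pA`
  have sqQ : IsPushout inB (hT.from B) pA (hI.to A) := by
    refine MV.isPushout_mk _ _ _ _ hBpA (fun u v _ => inA ≫ u) ?_ ?_ ?_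
    · intro W u v h
      refine sq.hom_ext ?_ ?_
      · rw [← assoc, hApA, id_comp]
      · rw [← assoc, hBpA, assoc, hI.hom_ext (hI.to A ≫ inA ≫ u) v]
        exact h.symm
    · intro W u v h
      exact hI.hom_ext _ _
    · intro W u v h mm h₁ h₂
      calc mm = inA ≫ pA ≫ mm := by rw [← assoc, hApA, id_comp]
        _ = inA ≫ u := by rw [h₁]
  have htri := T.elementary_triangle hcinB
    (⟨I, hT, hI, hT.from B, A, pA, hI.to A, sqQ⟩ : QuotientData 𝒞 inB)
  -- the connecting map of this triangle vanishes
  have hδ0 : T.δ hcinB (⟨I, hT, hI, hT.from B, A, pA, hI.to A, sqQ⟩ : QuotientData 𝒞 inB)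
      = 0 := by
    have h31 := comp_distTriang_mor_zero₃₁ _ htri
    dsimp [Triangle.mk] at h31
    have hretr : γ.map inB ≫ γ.map pB = 𝟙 _ := by
      rw [← γ.map_comp, hBpB, γ.map_id]
    calc T.δ hcinB _ = T.δ hcinB _ ≫ ((γ.map inB ≫ γ.map pB)⟦(1:ℤ)⟧') := by
          rw [hretr, CategoryTheory.Functor.map_id, comp_id]
      _ = 0 := by
          rw [CategoryTheory.Functor.map_comp, ← assoc, h31]
          exact zero_comp
  -- compare with the split triangle
  have hbbt := binaryBiproductTriangle_distinguished (γ.obj B) (γ.obj A)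
  have h2' : IsIso (biprod.lift (γ.map pB) (γ.map pA)) := by
    exact isIso₂_of_isIso₁₃
      (Triangle.homMk (Triangle.mk (γ.map inB) (γ.map pA)
          (T.δ hcinB (⟨I, hT, hI, hT.from B, A, pA, hI.to A, sqQ⟩ : QuotientData 𝒞 inB)))
        (binaryBiproductTriangle (γ.obj B) (γ.obj A))
        (𝟙 _) (biprod.lift (γ.map pB) (γ.map pA)) (𝟙 _)
        (by
          dsimp [Triangle.mk, binaryBiproductTriangle]
          ext
          · rw [assoc, biprod.lift_fst, ← γ.map_comp, hBpB, γ.map_id, id_comp, biprod.inl_fst]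
          · rw [assoc, biprod.lift_snd, ← γ.map_comp, hBpA, γ.map_comp, id_comp, biprod.inl_snd]
            exact hzc _ _)
        (by
          dsimp [Triangle.mk, binaryBiproductTriangle]
          rw [comp_id, biprod.lift_snd])
        (by
          dsimp [Triangle.mk, binaryBiproductTriangle]
          rw [hδ0, zero_comp, comp_zero]))
      htri hbbt (show IsIso (𝟙 _) by infer_instance) (show IsIso (𝟙 _) by infer_instance)
  -- deduce that the lift in the other order is an isomorphism
  have hbr : biprod.lift (γ.map pA) (γ.map pB)
      = biprod.lift (γ.map pB) (γ.map pA) ≫ (biprod.braiding (γ.obj B) (γ.obj A)).hom := by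
    ext <;> simp
  have hφiso : IsIso (biprod.lift (γ.map pA) (γ.map pB)) := by
    rw [hbr]; infer_instance
  set ψ := biprod.desc (γ.map inA) (γ.map inB) with hψdef
  set φ := biprod.lift (γ.map pA) (γ.map pB) with hφdef
  have hz1 : γ.map (inA ≫ pB) = 0 := by rw [hApB, γ.map_comp]; exact hzc _ _
  have hz2 : γ.map (inB ≫ pA) = 0 := by rw [hBpA, γ.map_comp]; exact hzc _ _
  have hψφ : ψ ≫ φ = 𝟙 _ := by
    ext <;> simp [hψdef, hφdef, ← γ.map_comp, hz1, hz2, hApA, hBpB]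
  have hφψ : φ ≫ ψ = 𝟙 _ := by
    haveI := hφiso
    have h5 : φ ≫ (ψ ≫ φ) ≫ inv φ = φ ≫ ψ := by simp
    rw [← h5, hψφ, id_comp, IsIso.hom_inv_id]
  exact ⟨⟨φ, hψφ, hφψ⟩, hφiso, hψφ, hφψ⟩

end MVAux

/-- Mayer–Vietoris: a pushout square along a cofibration in a stable cofibration category
becomes a homotopy cartesian square in the triangulated homotopy category; more precisely
there is an exact triangle `Y ⊕ Z → P → ΣX → Σ(Y ⊕ Z)` whose last morphism is `Σ(-f, g)`. -/
theorem pushout_homotopyCartesian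
    (𝒞 : CofibrationCategory C) (hpt : 𝒞.Pointed)
    (H : Type u') [Category.{v'} H] [Preadditive H] [HasZeroObject H] [HasShift H ℤ]
    [∀ n : ℤ, (shiftFunctor H n).Additive] [Pretriangulated H] [HasBinaryBiproducts H]
    (γ : C ⥤ H) (T : TriangulatedHomotopyCategory 𝒞 H γ)
    {X Y Z P : C} (f : X ⟶ Y) (g : X ⟶ Z) (g' : Y ⟶ P) (f' : Z ⟶ P)
    (hf : 𝒞.cof f) (hsq : IsPushout f g g' f') :
    HomotopyCartesian (γ.map f) (γ.map g) (γ.map g') (γ.map f') ∧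
    ∃ par : γ.obj P ⟶ (γ.obj X)⟦(1 : ℤ)⟧,
      Triangle.mk (biprod.desc (γ.map g') (γ.map f')) par
        ((biprod.lift (-(γ.map f)) (γ.map g))⟦(1 : ℤ)⟧') ∈ distTriang H := by
  haveI := T.isLocalization
  obtain ⟨I, ⟨hI⟩⟩ := 𝒞.initial_exists
  obtain ⟨hT⟩ := hpt I hI
  have hz : IsZero (γ.obj I) := MV.isZero 𝒞 γ T hI hT
  have hzc : ∀ {A' B' : C} (u : A' ⟶ I) (v : I ⟶ B'), γ.map u ≫ γ.map v = 0 := by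
    intro A' B' u v
    rw [hz.eq_of_src (γ.map v) 0, comp_zero]
  -- coproducts Y ⊔ Z and X ⊔ X
  obtain ⟨SYZ, iY, iZ, pY, pZ, sqYZ, hciY, hciZ, hYpY, hZpZ, hYpZ, hZpY, hψYZ, hφYZ, hψφYZ,
    hφψYZ⟩ := MV.coprod 𝒞 γ T hI hT hz Y Z
  obtain ⟨SXX, i1, i2, p1, p2, sqXX, hci1, hci2, h1p1, h2p2, h1p2, h2p1, hψXX, hφXX, hψφXX,
    hφψXX⟩ := MV.coprod 𝒞 γ T hI hT hz X X
  -- a cylinder object for X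
  obtain ⟨IX, m, wI, hcm, hwI, hmw⟩ := 𝒞.factorization (sqXX.desc (𝟙 X) (𝟙 X) (hI.hom_ext _ _))
  have h1m : (i1 ≫ m) ≫ wI = 𝟙 X := by rw [assoc, hmw, sqXX.inl_desc]
  have h2m : (i2 ≫ m) ≫ wI = 𝟙 X := by rw [assoc, hmw, sqXX.inr_desc]
  have hci0 : 𝒞.cof (i1 ≫ m) := 𝒞.cof_comp _ _ hci1 hcm
  have hwi0 : 𝒞.weq (i1 ≫ m) :=
    𝒞.weq_of_comp_left _ wI hwI (by rw [h1m]; exact 𝒞.weq_of_isIso _ inferInstance)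
  -- the suspension of X
  obtain ⟨Sg, qm, fTm, sqm⟩ := 𝒞.pushout_exists m (hT.from SXX) hcm
  -- the double mapping cylinder
  obtain ⟨DM, nDM, j, sqDM⟩ :=
    𝒞.pushout_exists m (sqXX.desc (f ≫ iY) (g ≫ iZ) (hI.hom_ext _ _)) hcm
  set fg := sqXX.desc (f ≫ iY) (g ≫ iZ) (hI.hom_ext _ _) with hfgdef
  have h1fg : i1 ≫ fg = f ≫ iY := sqXX.inl_desc _ _ _
  have h2fg : i2 ≫ fg = g ≫ iZ := sqXX.inr_desc _ _ _
  have hcj : 𝒞.cof j := 𝒞.cof_pushout _ _ _ _ sqDM hcm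
  -- quotient data for j, with the same quotient object Sg
  have hQjcomp : m ≫ qm = fg ≫ (hT.from SYZ ≫ fTm) := by
    rw [sqm.w, ← assoc, hT.hom_ext (fg ≫ hT.from SYZ) (hT.from SXX)]
  set qDM := sqDM.desc qm (hT.from SYZ ≫ fTm) hQjcomp with hqDMdef
  have hnqDM : nDM ≫ qDM = qm := sqDM.inl_desc _ _ _
  have hjqDM : j ≫ qDM = hT.from SYZ ≫ fTm := sqDM.inr_desc _ _ _
  have sqj : IsPushout j (hT.from SYZ) qDM fTm := by
    have hcmp : ∀ {W : C} (u : DM ⟶ W) (v : I ⟶ W), j ≫ u = hT.from SYZ ≫ v →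
        m ≫ (nDM ≫ u) = hT.from SXX ≫ v := by
      intro W u v h
      rw [← assoc, sqDM.w, assoc, h, ← assoc, hT.hom_ext (fg ≫ hT.from SYZ) (hT.from SXX)]
    refine MV.isPushout_mk _ _ _ _ hjqDM (fun {W} u v h => sqm.desc (nDM ≫ u) v (hcmp u v h))
      ?_ ?_ ?_
    · intro W u v h
      refine sqDM.hom_ext ?_ ?_
      · rw [← assoc, hnqDM, sqm.inl_desc]
      · rw [← assoc, hjqDM, assoc, sqm.inr_desc, h]
    · intro W u v h
      exact sqm.inr_desc _ _ _
    · intro W u v h mm h₁ h₂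
      refine sqm.hom_ext ?_ ?_
      · rw [sqm.inl_desc, ← hnqDM, assoc, h₁]
      · rw [sqm.inr_desc, h₂]
  -- naturality of δ with respect to (fg, nDM) : m → j
  have hδj := T.δ_natural hcm hcj fg nDM sqDM.w
    (⟨I, hT, hI, hT.from SXX, Sg, qm, fTm, sqm⟩ : QuotientData 𝒞 m)
    (⟨I, hT, hI, hT.from SYZ, Sg, qDM, fTm, sqj⟩ : QuotientData 𝒞 j)
    (𝟙 Sg) (by dsimp; rw [comp_id, hnqDM])
  -- the comparison map r : DM ⟶ P
  set e := sqYZ.desc g' f' (hI.hom_ext _ _) with hedef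
  have hYe : iY ≫ e = g' := sqYZ.inl_desc _ _ _
  have hZe : iZ ≫ e = f' := sqYZ.inr_desc _ _ _
  have hrcomp : m ≫ (wI ≫ f ≫ g') = fg ≫ e := by
    refine sqXX.hom_ext ?_ ?_
    · simp only [assoc, reassoc_of% h1m, reassoc_of% h1fg, hYe, id_comp]
    · simp only [assoc, reassoc_of% h2m, reassoc_of% h2fg, hZe, id_comp]
      exact hsq.w
  set r := sqDM.desc (wI ≫ f ≫ g') e hrcomp with hrdef
  have hnr : nDM ≫ r = wI ≫ f ≫ g' := sqDM.inl_desc _ _ _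
  have hjr : j ≫ r = e := sqDM.inr_desc _ _ _
  -- the auxiliary object A1 = Y ∪_X IX
  obtain ⟨A1, g1, f1, sqA1⟩ := 𝒞.pushout_exists f (i1 ≫ m) hf
  have hg1weq : 𝒞.weq g1 := 𝒞.acyclic_cof_pushout _ _ _ _ sqA1.flip hci0 hwi0
  have hcf1 : 𝒞.cof f1 := 𝒞.cof_pushout _ _ _ _ sqA1 hf
  set r1 := sqA1.desc (𝟙 Y) (wI ≫ f) (by rw [comp_id, ← assoc, h1m, id_comp]) with hr1def
  have hg1r1 : g1 ≫ r1 = 𝟙 Y := sqA1.inl_desc _ _ _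
  have hf1r1 : f1 ≫ r1 = wI ≫ f := sqA1.inr_desc _ _ _
  set k1 := (i2 ≫ m) ≫ f1 with hk1def
  have hck1 : 𝒞.cof k1 := 𝒞.cof_comp _ _ (𝒞.cof_comp _ _ hci2 hcm) hcf1
  have hk1r1 : k1 ≫ r1 = f := by rw [hk1def, assoc, hf1r1, ← assoc, h2m, id_comp]
  -- the map a : A1 ⟶ DM
  have hacomp : f ≫ (iY ≫ j) = (i1 ≫ m) ≫ nDM := by
    rw [assoc, sqDM.w, ← assoc, ← assoc, h1fg]
  set a := sqA1.desc (iY ≫ j) nDM hacomp with hadef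
  have hg1a : g1 ≫ a = iY ≫ j := sqA1.inl_desc _ _ _
  have hf1a : f1 ≫ a = nDM := sqA1.inr_desc _ _ _
  set z := iZ ≫ j with hzdef
  have hcz : 𝒞.cof z := 𝒞.cof_comp _ _ hciZ hcj
  -- DM is the pushout of k1 along g
  have hk1az : k1 ≫ a = g ≫ z := by
    simp only [hk1def, hzdef, assoc, hf1a, sqDM.w, reassoc_of% h2fg]
  have sqS3 : IsPushout k1 g a z := by
    have sqA1w : i1 ≫ m ≫ f1 = f ≫ g1 := by rw [← assoc]; exact sqA1.w.symm
    have hdcomp : ∀ {W : C} (u : A1 ⟶ W) (v : Z ⟶ W), k1 ≫ u = g ≫ v →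
        m ≫ (f1 ≫ u) = fg ≫ sqYZ.desc (g1 ≫ u) v (hI.hom_ext _ _) := by
      intro W u v h
      have h' : i2 ≫ m ≫ f1 ≫ u = g ≫ v := by
        rw [← h, hk1def]; simp only [assoc]
      refine sqXX.hom_ext ?_ ?_
      · simp only [assoc, reassoc_of% h1fg, IsPushout.inl_desc, reassoc_of% sqA1w]
      · simp only [assoc, reassoc_of% h2fg, IsPushout.inr_desc]
        exact h'
    refine MV.isPushout_mk _ _ _ _ hk1az
      (fun {W} u v h => sqDM.desc (f1 ≫ u) (sqYZ.desc (g1 ≫ u) v (hI.hom_ext _ _))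
        (hdcomp u v h)) ?_ ?_ ?_
    · intro W u v h
      refine sqA1.hom_ext ?_ ?_
      · simp only [reassoc_of% hg1a, IsPushout.inr_desc, IsPushout.inl_desc]
      · simp only [reassoc_of% hf1a, IsPushout.inl_desc]
    · intro W u v h
      simp only [hzdef, assoc, IsPushout.inr_desc]
    · intro W u v h mm h₁ h₂
      refine sqDM.hom_ext ?_ ?_
      · rw [sqDM.inl_desc, ← hf1a, assoc, h₁]
      · rw [sqDM.inr_desc]
        refine sqYZ.hom_ext ?_ ?_
        · rw [sqYZ.inl_desc, ← reassoc_of% hg1a, h₁]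
        · rw [sqYZ.inr_desc, ← h₂, hzdef, assoc]
  -- quotient of k1 (and of z)
  obtain ⟨QA, qA, fTA, sqQA⟩ := 𝒞.pushout_exists k1 (hT.from X) hck1
  have hQzcomp : k1 ≫ qA = g ≫ (hT.from Z ≫ fTA) := by
    rw [sqQA.w, ← assoc, hT.hom_ext (g ≫ hT.from Z) (hT.from X)]
  set qz := sqS3.desc qA (hT.from Z ≫ fTA) hQzcomp with hqzdef
  have haqz : a ≫ qz = qA := sqS3.inl_desc _ _ _
  have hzqz : z ≫ qz = hT.from Z ≫ fTA := sqS3.inr_desc _ _ _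
  have sqz : IsPushout z (hT.from Z) qz fTA := by
    have hccomp : ∀ {W : C} (u : DM ⟶ W) (v : I ⟶ W), z ≫ u = hT.from Z ≫ v →
        k1 ≫ (a ≫ u) = hT.from X ≫ v := by
      intro W u v h
      rw [← assoc, hk1az, assoc, h, ← assoc, hT.hom_ext (g ≫ hT.from Z) (hT.from X)]
    refine MV.isPushout_mk _ _ _ _ hzqz
      (fun {W} u v h => sqQA.desc (a ≫ u) v (hccomp u v h)) ?_ ?_ ?_
    · intro W u v h
      refine sqS3.hom_ext ?_ ?_
      · rw [← assoc, haqz, sqQA.inl_desc]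
      · rw [← assoc, hzqz, assoc, sqQA.inr_desc, h]
    · intro W u v h
      exact sqQA.inr_desc _ _ _
    · intro W u v h mm h₁ h₂
      refine sqQA.hom_ext ?_ ?_
      · rw [sqQA.inl_desc, ← haqz, assoc, h₁]
      · rw [sqQA.inr_desc, h₂]
  -- quotient of f (and of f')
  obtain ⟨Q, qY, fTQ, sqQ⟩ := 𝒞.pushout_exists f (hT.from X) hf
  have hcf' : 𝒞.cof f' := 𝒞.cof_pushout f g g' f' hsq hf
  have hQfcomp : f ≫ qY = g ≫ (hT.from Z ≫ fTQ) := by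
    rw [sqQ.w, ← assoc, hT.hom_ext (g ≫ hT.from Z) (hT.from X)]
  set qP := hsq.desc qY (hT.from Z ≫ fTQ) hQfcomp with hqPdef
  have hg'qP : g' ≫ qP = qY := hsq.inl_desc _ _ _
  have hf'qP : f' ≫ qP = hT.from Z ≫ fTQ := hsq.inr_desc _ _ _
  have sqf' : IsPushout f' (hT.from Z) qP fTQ := by
    have hccomp : ∀ {W : C} (u : P ⟶ W) (v : I ⟶ W), f' ≫ u = hT.from Z ≫ v →
        f ≫ (g' ≫ u) = hT.from X ≫ v := by
      intro W u v h
      rw [← assoc, hsq.w, assoc, h, ← assoc, hT.hom_ext (g ≫ hT.from Z) (hT.from X)]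
    refine MV.isPushout_mk _ _ _ _ hf'qP
      (fun {W} u v h => sqQ.desc (g' ≫ u) v (hccomp u v h)) ?_ ?_ ?_
    · intro W u v h
      refine hsq.hom_ext ?_ ?_
      · rw [← assoc, hg'qP, sqQ.inl_desc]
      · rw [← assoc, hf'qP, assoc, sqQ.inr_desc, h]
    · intro W u v h
      exact sqQ.inr_desc _ _ _
    · intro W u v h mm h₁ h₂
      refine sqQ.hom_ext ?_ ?_
      · rw [sqQ.inl_desc, ← hg'qP, assoc, h₁]
      · rw [sqQ.inr_desc, h₂]
  -- the induced map on quotients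
  have hrbcomp : k1 ≫ (r1 ≫ qY) = hT.from X ≫ fTQ := by
    rw [← assoc, hk1r1, sqQ.w]
  set rb := sqQA.desc (r1 ≫ qY) fTQ hrbcomp with hrbdef
  have hqArb : qA ≫ rb = r1 ≫ qY := sqQA.inl_desc _ _ _
  have hfTArb : fTA ≫ rb = fTQ := sqQA.inr_desc _ _ _
  -- γ inverts r1
  haveI hg1iso : IsIso (γ.map g1) := Localization.inverts γ 𝒞.weq g1 hg1weq
  have hfac : γ.map g1 ≫ γ.map r1 = 𝟙 _ := by rw [← γ.map_comp, hg1r1, γ.map_id]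
  haveI hr1iso : IsIso (γ.map r1) := by
    rw [← IsIso.inv_eq_of_hom_inv_id hfac]
    infer_instance
  -- γ inverts rb, by comparing the triangles of k1 and f
  haveI hrbiso : IsIso (γ.map rb) := by
    have htk := T.elementary_triangle hck1
      (⟨I, hT, hI, hT.from X, QA, qA, fTA, sqQA⟩ : QuotientData 𝒞 k1)
    have htf := T.elementary_triangle hf
      (⟨I, hT, hI, hT.from X, Q, qY, fTQ, sqQ⟩ : QuotientData 𝒞 f)
    have hnat := T.δ_natural hck1 hf (𝟙 X) r1 (by rw [id_comp, hk1r1])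
      (⟨I, hT, hI, hT.from X, QA, qA, fTA, sqQA⟩ : QuotientData 𝒞 k1)
      (⟨I, hT, hI, hT.from X, Q, qY, fTQ, sqQ⟩ : QuotientData 𝒞 f) rb (by dsimp; rw [hqArb])
    exact isIso₃_of_isIso₁₂
      (Triangle.homMk
        (Triangle.mk (γ.map k1) (γ.map qA)
          (T.δ hck1 (⟨I, hT, hI, hT.from X, QA, qA, fTA, sqQA⟩ : QuotientData 𝒞 k1)))
        (Triangle.mk (γ.map f) (γ.map qY)
          (T.δ hf (⟨I, hT, hI, hT.from X, Q, qY, fTQ, sqQ⟩ : QuotientData 𝒞 f)))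
        (𝟙 _) (γ.map r1) (γ.map rb)
        (by dsimp [Triangle.mk]; rw [id_comp, ← γ.map_comp, hk1r1])
        (by dsimp [Triangle.mk]; rw [← γ.map_comp, ← γ.map_comp, hqArb])
        (by dsimp [Triangle.mk]; rw [← hnat, γ.map_id]))
      htk htf (show IsIso (𝟙 _) by infer_instance) (show IsIso (γ.map r1) by infer_instance)
  -- γ inverts r, by comparing the triangles of z and f'
  have hzr : z ≫ r = f' := by rw [hzdef, assoc, hjr, hZe]
  have hqzrb : qz ≫ rb = r ≫ qP := by
    refine sqS3.hom_ext ?_ ?_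
    · rw [← assoc, haqz, hqArb, ← assoc]
      have har : a ≫ r ≫ qP = r1 ≫ qY := by
        refine sqA1.hom_ext ?_ ?_
        · simp only [assoc, reassoc_of% hg1a, reassoc_of% hjr, reassoc_of% hYe, hg'qP,
            reassoc_of% hg1r1, id_comp]
        · simp only [assoc, reassoc_of% hf1a, reassoc_of% hnr, hg'qP, reassoc_of% hf1r1]
      rw [assoc, har]
    · rw [← assoc, hzqz, assoc, hfTArb, ← assoc, hzr, hf'qP]
  haveI hriso : IsIso (γ.map r) := by
    have htz := T.elementary_triangle hcz
      (⟨I, hT, hI, hT.from Z, QA, qz, fTA, sqz⟩ : QuotientData 𝒞 z)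
    have htf' := T.elementary_triangle hcf'
      (⟨I, hT, hI, hT.from Z, Q, qP, fTQ, sqf'⟩ : QuotientData 𝒞 f')
    have hnat := T.δ_natural hcz hcf' (𝟙 Z) r (by rw [id_comp, hzr])
      (⟨I, hT, hI, hT.from Z, QA, qz, fTA, sqz⟩ : QuotientData 𝒞 z)
      (⟨I, hT, hI, hT.from Z, Q, qP, fTQ, sqf'⟩ : QuotientData 𝒞 f') rb (by dsimp; rw [hqzrb])
    exact isIso₂_of_isIso₁₃
      (Triangle.homMk
        (Triangle.mk (γ.map z) (γ.map qz)
          (T.δ hcz (⟨I, hT, hI, hT.from Z, QA, qz, fTA, sqz⟩ : QuotientData 𝒞 z)))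
        (Triangle.mk (γ.map f') (γ.map qP)
          (T.δ hcf' (⟨I, hT, hI, hT.from Z, Q, qP, fTQ, sqf'⟩ : QuotientData 𝒞 f')))
        (𝟙 _) (γ.map r) (γ.map rb)
        (by dsimp [Triangle.mk]; rw [id_comp, ← γ.map_comp, hzr])
        (by dsimp [Triangle.mk]; rw [← γ.map_comp, ← γ.map_comp, hqzrb])
        (by dsimp [Triangle.mk]; rw [← hnat, γ.map_id]))
      htz htf' (show IsIso (𝟙 _) by infer_instance) (show IsIso (γ.map rb) by infer_instance)
  -- simplify the δ-naturality statement for j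
  rw [γ.map_id, id_comp] at hδj
  -- notation
  haveI := T.isLocalization
  haveI hwIiso : IsIso (γ.map wI) := Localization.inverts γ 𝒞.weq wI hwI
  set ψXX := biprod.desc (γ.map i1) (γ.map i2) with hψXXdef
  set φXX := biprod.lift (γ.map p1) (γ.map p2) with hφXXdef
  set ψYZ := biprod.desc (γ.map iY) (γ.map iZ) with hψYZdef
  set δm := T.δ hcm (⟨I, hT, hI, hT.from SXX, Sg, qm, fTm, sqm⟩ : QuotientData 𝒞 m) with hδmdef
  set L0 := biprod.lift (𝟙 (γ.obj X)) (-(𝟙 (γ.obj X))) with hL0def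
  -- the triangle Tm''
  have hnabla : ψXX ≫ γ.map (m ≫ wI) = biprod.desc (𝟙 (γ.obj X)) (𝟙 (γ.obj X)) := by
    rw [hmw]
    ext
    · rw [hψXXdef, biprod.inl_desc_assoc, ← γ.map_comp, sqXX.inl_desc, γ.map_id,
        biprod.inl_desc]
    · rw [hψXXdef, biprod.inr_desc_assoc, ← γ.map_comp, sqXX.inr_desc, γ.map_id,
        biprod.inr_desc]
  have hTm : Triangle.mk (biprod.desc (𝟙 (γ.obj X)) (𝟙 (γ.obj X)))
      (inv (γ.map wI) ≫ γ.map qm) (δm ≫ φXX⟦(1:ℤ)⟧') ∈ distTriang H := by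
    refine isomorphic_distinguished _ (T.elementary_triangle hcm
      (⟨I, hT, hI, hT.from SXX, Sg, qm, fTm, sqm⟩ : QuotientData 𝒞 m)) _ ?_
    refine Triangle.isoMk _ _ (@asIso _ _ _ _ ψXX hψXX) (asIso (γ.map wI)).symm (Iso.refl _) ?_ ?_ ?_
    · dsimp [Triangle.mk]
      rw [← cancel_mono (γ.map wI)]
      simp only [assoc, IsIso.inv_hom_id, comp_id, ← γ.map_comp, hnabla]
    · dsimp [Triangle.mk]
      rw [comp_id]
    · dsimp [Triangle.mk]
      rw [id_comp, assoc, ← CategoryTheory.Functor.map_comp, hφψXX,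
        CategoryTheory.Functor.map_id, comp_id]
  -- the split triangle F
  haveI hA'iso : IsIso (biprod.desc (biprod.lift (𝟙 (γ.obj X)) (𝟙 (γ.obj X))) biprod.inr) := by
    refine ⟨biprod.desc (biprod.lift (𝟙 _) (-(𝟙 _))) biprod.inr, ?_, ?_⟩
    · ext <;> simp [biprod.lift_desc]
    · ext <;> simp [biprod.lift_desc]
  have hFT : Triangle.mk L0 (biprod.desc (𝟙 (γ.obj X)) (𝟙 (γ.obj X)))
      (0 : γ.obj X ⟶ (γ.obj X)⟦(1:ℤ)⟧) ∈ distTriang H := by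
    refine isomorphic_distinguished _
      (binaryBiproductTriangle_distinguished (γ.obj X) (γ.obj X)) _ ?_
    refine Triangle.isoMk _ _ (Iso.refl _)
      (@asIso _ _ _ _ (biprod.desc (biprod.lift (𝟙 (γ.obj X)) (𝟙 (γ.obj X))) biprod.inr) hA'iso)
      (Iso.refl _) ?_ ?_ ?_
    · dsimp [Triangle.mk, binaryBiproductTriangle]
      rw [id_comp, hL0def]
      ext <;> simp [biprod.lift_desc]
    · dsimp [Triangle.mk, binaryBiproductTriangle]
      rw [comp_id]
      ext <;> simp
    · dsimp [Triangle.mk, binaryBiproductTriangle]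
      simp
  -- the comparison isomorphism Θ : γ.obj Sg ≅ (γ.obj X)⟦1⟧
  obtain ⟨Θ, hΘ₂, hΘ₃⟩ : ∃ Θ : γ.obj Sg ⟶ (γ.obj X)⟦(1:ℤ)⟧, _ ∧ _ := complete_distinguished_triangle_morphism
    (Triangle.mk (biprod.desc (𝟙 (γ.obj X)) (𝟙 (γ.obj X)))
      (inv (γ.map wI) ≫ γ.map qm) (δm ≫ φXX⟦(1:ℤ)⟧'))
    (Triangle.mk L0 (biprod.desc (𝟙 (γ.obj X)) (𝟙 (γ.obj X)))
      (0 : γ.obj X ⟶ (γ.obj X)⟦(1:ℤ)⟧)).rotate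
    hTm (rot_of_distTriang _ hFT) (𝟙 _) (𝟙 _) (by dsimp [Triangle.mk, Triangle.rotate]; rw [comp_id, id_comp])
  haveI hΘiso : IsIso Θ := isIso₃_of_isIso₁₂
    (Triangle.homMk
      (Triangle.mk (biprod.desc (𝟙 (γ.obj X)) (𝟙 (γ.obj X)))
        (inv (γ.map wI) ≫ γ.map qm) (δm ≫ φXX⟦(1:ℤ)⟧'))
      (Triangle.mk L0 (biprod.desc (𝟙 (γ.obj X)) (𝟙 (γ.obj X)))
        (0 : γ.obj X ⟶ (γ.obj X)⟦(1:ℤ)⟧)).rotate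
      (𝟙 _) (𝟙 _) Θ (by dsimp [Triangle.mk, Triangle.rotate]; rw [comp_id, id_comp]) hΘ₂ hΘ₃)
    hTm (rot_of_distTriang _ hFT) (show IsIso (𝟙 _) by infer_instance) (show IsIso (𝟙 _) by infer_instance)
  have hδmφ : δm ≫ φXX⟦(1:ℤ)⟧' = Θ ≫ (-(L0⟦(1:ℤ)⟧')) := by
    have h := hΘ₃
    dsimp [Triangle.mk, Triangle.rotate] at h
    rw [CategoryTheory.Functor.map_id, comp_id] at h
    exact h
  -- the key identification of the connecting map of j
  have hid1 : φXX⟦(1:ℤ)⟧' ≫ ψXX⟦(1:ℤ)⟧' = 𝟙 _ := by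
    rw [← CategoryTheory.Functor.map_comp, hφψXX, CategoryTheory.Functor.map_id]
  have e1 : γ.map i1 ≫ γ.map fg = γ.map f ≫ γ.map iY := by
    rw [← γ.map_comp, ← γ.map_comp, h1fg]
  have e2 : γ.map i2 ≫ γ.map fg = γ.map g ≫ γ.map iZ := by
    rw [← γ.map_comp, ← γ.map_comp, h2fg]
  have hkey : (-L0) ≫ ψXX ≫ γ.map fg
      = biprod.lift (-(γ.map f)) (γ.map g) ≫ ψYZ := by
    simp only [hL0def, hψXXdef, hψYZdef, biprod.lift_eq, Preadditive.add_comp,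
      Preadditive.neg_comp, Preadditive.comp_neg, id_comp, assoc, biprod.inl_desc,
      biprod.inr_desc, biprod.inl_desc_assoc, biprod.inr_desc_assoc, e1, e2]
    abel
  have hδjF : T.δ hcj (⟨I, hT, hI, hT.from SYZ, Sg, qDM, fTm, sqj⟩ : QuotientData 𝒞 j)
      = Θ ≫ ((biprod.lift (-(γ.map f)) (γ.map g) ≫ ψYZ)⟦(1:ℤ)⟧') := by
    calc T.δ hcj (⟨I, hT, hI, hT.from SYZ, Sg, qDM, fTm, sqj⟩ : QuotientData 𝒞 j)
        = δm ≫ (γ.map fg)⟦(1:ℤ)⟧' := hδj.symm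
      _ = δm ≫ (φXX⟦(1:ℤ)⟧' ≫ ψXX⟦(1:ℤ)⟧') ≫ (γ.map fg)⟦(1:ℤ)⟧' := by
          rw [hid1, id_comp]
      _ = (δm ≫ φXX⟦(1:ℤ)⟧') ≫ (ψXX ≫ γ.map fg)⟦(1:ℤ)⟧' := by
          rw [CategoryTheory.Functor.map_comp]
          simp only [assoc]
      _ = (Θ ≫ (-(L0⟦(1:ℤ)⟧'))) ≫ (ψXX ≫ γ.map fg)⟦(1:ℤ)⟧' := by rw [hδmφ]
      _ = Θ ≫ (((-L0) ≫ ψXX ≫ γ.map fg)⟦(1:ℤ)⟧') := by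
          simp only [CategoryTheory.Functor.map_comp, CategoryTheory.Functor.map_neg, assoc,
            Preadditive.neg_comp, Preadditive.comp_neg]
      _ = Θ ≫ ((biprod.lift (-(γ.map f)) (γ.map g) ≫ ψYZ)⟦(1:ℤ)⟧') := by rw [hkey]
  -- the distinguished triangle U
  haveI hψYZiso : IsIso ψYZ := hψYZ
  have hU : Triangle.mk (biprod.desc (γ.map g') (γ.map f'))
      (inv (γ.map r) ≫ γ.map qDM ≫ Θ)
      ((biprod.lift (-(γ.map f)) (γ.map g))⟦(1:ℤ)⟧') ∈ distTriang H := by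
    refine isomorphic_distinguished _ (T.elementary_triangle hcj
      (⟨I, hT, hI, hT.from SYZ, Sg, qDM, fTm, sqj⟩ : QuotientData 𝒞 j)) _ ?_
    refine Triangle.isoMk _ _ (@asIso _ _ _ _ ψYZ hψYZiso) (asIso (γ.map r)).symm (asIso Θ).symm ?_ ?_ ?_
    · dsimp [Triangle.mk]
      rw [← cancel_mono (γ.map r)]
      simp only [assoc, IsIso.inv_hom_id, comp_id, ← γ.map_comp, hjr]
      ext
      · rw [biprod.inl_desc, hψYZdef, biprod.inl_desc_assoc, ← γ.map_comp, hYe]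
      · rw [biprod.inr_desc, hψYZdef, biprod.inr_desc_assoc, ← γ.map_comp, hZe]
    · dsimp [Triangle.mk]
      simp only [assoc, IsIso.hom_inv_id, comp_id]
    · dsimp [Triangle.mk]
      rw [hδjF, IsIso.inv_hom_id_assoc, CategoryTheory.Functor.map_comp]
  constructor
  · -- homotopy cartesian
    have hUrot := inv_rot_of_distTriang _ hU
    refine ⟨(Triangle.mk (biprod.desc (γ.map g') (γ.map f'))
        (inv (γ.map r) ≫ γ.map qDM ≫ Θ)
        ((biprod.lift (-(γ.map f)) (γ.map g))⟦(1:ℤ)⟧')).invRotate.mor₃ ≫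
        ((shiftFunctorCompIsoId H (1:ℤ) (-1:ℤ) (add_neg_cancel (1:ℤ))).hom.app
          (γ.obj X))⟦(1:ℤ)⟧', ?_⟩
    refine isomorphic_distinguished _ hUrot _ ?_
    refine Triangle.isoMk _ _
      (((shiftFunctorCompIsoId H (1:ℤ) (-1:ℤ) (add_neg_cancel (1:ℤ))).app (γ.obj X)).symm)
      (Iso.refl _) (Iso.refl _) ?_ ?_ ?_
    · have hnat1 := (shiftFunctorCompIsoId H (1:ℤ) (-1:ℤ) (add_neg_cancel (1:ℤ))).hom.naturality
        (biprod.lift (-(γ.map f)) (γ.map g))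
      dsimp [Triangle.mk] at hnat1
      dsimp [Triangle.mk, Triangle.invRotate]
      change _ = _ ≫ (-((shiftFunctor H (-1)).map ((shiftFunctor H 1).map
        (biprod.lift (-(γ.map f)) (γ.map g))) ≫ (shiftFunctorCompIsoId H (1:ℤ) (-1:ℤ)
        (add_neg_cancel (1:ℤ))).hom.app (γ.obj Y ⊞ γ.obj Z)))
      rw [hnat1, Preadditive.comp_neg, Iso.inv_hom_id_app_assoc]
      apply biprod.hom_ext <;> simp
    · dsimp [Triangle.mk, Triangle.invRotate]
      rw [comp_id, id_comp]
    · dsimp [Triangle.mk, Triangle.invRotate]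
      rw [id_comp, assoc, ← CategoryTheory.Functor.map_comp, Iso.hom_inv_id_app]
      simp
  · exact ⟨inv (γ.map r) ≫ γ.map qDM ≫ Θ, hU⟩
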